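/- Let M be a finite MDP with optimal policy π* and optimal value V* bounded in [V_min, V_max], costs bounded in [c_min, c_max], discount γ ∈ [0,1). Let M̂ be an α-approximation of M (transition kernels within α in L1, costs within α), and V̂ an ε-approximation of V* in sup norm. Let π̂ be the H-step greedy policy: from each state s, π̂ executes the first action of the sequence minimizing the expected H-step discounted cost in M̂ with terminal cost γ^H V̂. Then ‖V^{π̂}_M − V*‖_∞ ≤ (2/(1 − γ^H)) [ γ ((1 − γ^{H−1})/(1 − γ)) α H (c_max − c_min)/2 + γ^H α H (V_max − V_min)/2 + ((1 − γ^H)/(1 − γ)) α + γ^H ε ]. -/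

import Mathlib

/-- `hStepCost P c γ π V H s` is the expected `H`-step discounted cost of
executing policy `π` from state `s` with transitions `P`, cost `c`, and
terminal cost `γ^H V (s_H)`. -/
noncomputable def hStepCost {S A : Type*} [Fintype S]
    (P : S → A → S → ℝ) (c : S → A → ℝ) (γ : ℝ) (π : S → A) (V : S → ℝ) :
    ℕ → S → ℝ
  | 0, s => V s
  | H + 1, s => c s (π s) + γ * ∑ s', P s (π s) s' * hStepCost P c γ π V H s'

section Aux

variable {S A : Type*} [Fintype S]

/-- Unrolling a Bellman fixed point. -/
lemma hStepCost_fixed (P : S → A → S → ℝ) (c : S → A → ℝ) (γ : ℝ) (π : S → A)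
    (V : S → ℝ) (hV : ∀ s, V s = c s (π s) + γ * ∑ s', P s (π s) s' * V s') :
    ∀ H s, hStepCost P c γ π V H s = V s := by
  intro H
  induction H with
  | zero => intro s; rfl
  | succ k ih =>
      intro s
      have : (∑ s', P s (π s) s' * hStepCost P c γ π V k s')
          = ∑ s', P s (π s) s' * V s' :=
        Finset.sum_congr rfl (fun s' _ => by rw [ih s'])
      show c s (π s) + γ * ∑ s', P s (π s) s' * hStepCost P c γ π V k s' = V s
      rw [this, ← hV s]

/-- Perturbing the terminal value. -/
lemma hStepCost_terminal_perturb (P : S → A → S → ℝ) (c : S → A → ℝ) (γ : ℝ)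
    (π : S → A) (V W : S → ℝ) (e : ℝ) (hγ0 : 0 ≤ γ)
    (hP0 : ∀ s a s', 0 ≤ P s a s') (hP1 : ∀ s a, ∑ s', P s a s' = 1)
    (he : ∀ s, |V s - W s| ≤ e) :
    ∀ H s, |hStepCost P c γ π V H s - hStepCost P c γ π W H s| ≤ γ ^ H * e := by
  intro H
  induction H with
  | zero => intro s; simpa [hStepCost] using he s
  | succ k ih =>
      intro s
      have hd : hStepCost P c γ π V (k+1) s - hStepCost P c γ π W (k+1) s
          = γ * ∑ s', P s (π s) s' *
              (hStepCost P c γ π V k s' - hStepCost P c γ π W k s') := by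
        show (c s (π s) + γ * ∑ s', P s (π s) s' * hStepCost P c γ π V k s')
            - (c s (π s) + γ * ∑ s', P s (π s) s' * hStepCost P c γ π W k s') = _
        simp only [mul_sub, Finset.sum_sub_distrib]
        ring
      rw [hd, abs_mul, abs_of_nonneg hγ0]
      have h2 : |∑ s', P s (π s) s' *
          (hStepCost P c γ π V k s' - hStepCost P c γ π W k s')| ≤ γ ^ k * e := by
        refine (Finset.abs_sum_le_sum_abs _ _).trans ?_
        have : ∀ s' ∈ Finset.univ, |P s (π s) s' *
            (hStepCost P c γ π V k s' - hStepCost P c γ π W k s')|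
            ≤ P s (π s) s' * (γ ^ k * e) := by
          intro s' _
          rw [abs_mul, abs_of_nonneg (hP0 s (π s) s')]
          exact mul_le_mul_of_nonneg_left (ih s') (hP0 s (π s) s')
        refine (Finset.sum_le_sum this).trans ?_
        rw [← Finset.sum_mul, hP1]
        simp
      calc γ * |∑ s', P s (π s) s' *
            (hStepCost P c γ π V k s' - hStepCost P c γ π W k s')|
          ≤ γ * (γ ^ k * e) := mul_le_mul_of_nonneg_left h2 hγ0
        _ = γ ^ (k+1) * e := by ring

/-- Range of the H-step cost. -/
lemma hStepCost_range (P : S → A → S → ℝ) (c : S → A → ℝ) (γ : ℝ)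
    (π : S → A) (V : S → ℝ) (cmin cmax Vmin Vmax : ℝ)
    (hγ0 : 0 ≤ γ) (hγ1 : γ < 1)
    (hP0 : ∀ s a s', 0 ≤ P s a s') (hP1 : ∀ s a, ∑ s', P s a s' = 1)
    (hc : ∀ s a, cmin ≤ c s a ∧ c s a ≤ cmax)
    (hV : ∀ s, Vmin ≤ V s ∧ V s ≤ Vmax) :
    ∀ k s, cmin * ((1 - γ ^ k) / (1 - γ)) + γ ^ k * Vmin ≤ hStepCost P c γ π V k s
      ∧ hStepCost P c γ π V k s ≤ cmax * ((1 - γ ^ k) / (1 - γ)) + γ ^ k * Vmax := by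
  have hne : (1 : ℝ) - γ ≠ 0 := by linarith
  intro k
  induction k with
  | zero => intro s; simpa [hStepCost] using hV s
  | succ k ih =>
      intro s
      have hg : (1 - γ ^ (k+1)) / (1 - γ) = 1 + γ * ((1 - γ ^ k) / (1 - γ)) := by
        field_simp
        ring
      have hlo : cmin * ((1 - γ ^ k) / (1 - γ)) + γ ^ k * Vmin
          ≤ ∑ s', P s (π s) s' * hStepCost P c γ π V k s' := by
        have h1 : ∑ s', P s (π s) s' * (cmin * ((1 - γ ^ k) / (1 - γ)) + γ ^ k * Vmin)
            ≤ ∑ s', P s (π s) s' * hStepCost P c γ π V k s' :=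
          Finset.sum_le_sum (fun s' _ =>
            mul_le_mul_of_nonneg_left (ih s').1 (hP0 s (π s) s'))
        rwa [← Finset.sum_mul, hP1, one_mul] at h1
      have hhi : ∑ s', P s (π s) s' * hStepCost P c γ π V k s'
          ≤ cmax * ((1 - γ ^ k) / (1 - γ)) + γ ^ k * Vmax := by
        have h1 : ∑ s', P s (π s) s' * hStepCost P c γ π V k s'
            ≤ ∑ s', P s (π s) s' * (cmax * ((1 - γ ^ k) / (1 - γ)) + γ ^ k * Vmax) :=
          Finset.sum_le_sum (fun s' _ =>
            mul_le_mul_of_nonneg_left (ih s').2 (hP0 s (π s) s'))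
        rwa [← Finset.sum_mul, hP1, one_mul] at h1
      constructor
      · show cmin * ((1 - γ ^ (k+1)) / (1 - γ)) + γ ^ (k+1) * Vmin
            ≤ c s (π s) + γ * ∑ s', P s (π s) s' * hStepCost P c γ π V k s'
        have := mul_le_mul_of_nonneg_left hlo hγ0
        have hc1 := (hc s (π s)).1
        rw [hg, pow_succ]; ring_nf; ring_nf at this; linarith
      · show c s (π s) + γ * ∑ s', P s (π s) s' * hStepCost P c γ π V k s'
            ≤ cmax * ((1 - γ ^ (k+1)) / (1 - γ)) + γ ^ (k+1) * Vmax
        have := mul_le_mul_of_nonneg_left hhi hγ0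
        have hc2 := (hc s (π s)).2
        rw [hg, pow_succ]; ring_nf; ring_nf at this; linarith

end Aux

noncomputable def simBound (γ α cmin cmax Vmin Vmax : ℝ) (k : ℕ) : ℝ :=
  γ * ((1 - γ ^ (k - 1)) / (1 - γ)) * α * k * ((cmax - cmin) / 2) +
    γ ^ k * α * k * ((Vmax - Vmin) / 2) + ((1 - γ ^ k) / (1 - γ)) * α

section Sim

variable {S A : Type*} [Fintype S]

lemma hStepCost_sim (P Phat : S → A → S → ℝ) (c chat : S → A → ℝ) (γ α : ℝ)
    (π : S → A) (V : S → ℝ) (cmin cmax Vmin Vmax : ℝ)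
    (hγ0 : 0 ≤ γ) (hγ1 : γ < 1) (hα : 0 ≤ α)
    (hP0 : ∀ s a s', 0 ≤ P s a s') (hP1 : ∀ s a, ∑ s', P s a s' = 1)
    (hPhat0 : ∀ s a s', 0 ≤ Phat s a s') (hPhat1 : ∀ s a, ∑ s', Phat s a s' = 1)
    (hPα : ∀ s a, ∑ s', |Phat s a s' - P s a s'| ≤ α)
    (hcα : ∀ s a, |chat s a - c s a| ≤ α)
    (hc : ∀ s a, cmin ≤ c s a ∧ c s a ≤ cmax)
    (hV : ∀ s, Vmin ≤ V s ∧ V s ≤ Vmax)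
    (hcc : cmin ≤ cmax) (hVV : Vmin ≤ Vmax) :
    ∀ k s, |hStepCost Phat chat γ π V k s - hStepCost P c γ π V k s|
      ≤ simBound γ α cmin cmax Vmin Vmax k := by
  have hne : (1 : ℝ) - γ ≠ 0 := by linarith
  have hpos : (0 : ℝ) < 1 - γ := by linarith
  intro k
  induction k with
  | zero => intro s; norm_num [simBound, hStepCost]
  | succ k ih =>
      intro s
      -- abbreviations
      set gk : ℝ := (1 - γ ^ k) / (1 - γ) with hgk
      have hgknn : 0 ≤ gk := by
        apply div_nonneg _ (le_of_lt hpos)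
        have : γ ^ k ≤ 1 := pow_le_one₀ hγ0 (le_of_lt hγ1)
        linarith
      have hγknn : (0:ℝ) ≤ γ ^ k := pow_nonneg hγ0 k
      set Lk : ℝ := cmin * gk + γ ^ k * Vmin with hLk
      set Uk : ℝ := cmax * gk + γ ^ k * Vmax with hUk
      have hrange := hStepCost_range P c γ π V cmin cmax Vmin Vmax hγ0 hγ1 hP0 hP1 hc hV k
      have hSnn : 0 ≤ Uk - Lk := by
        have : 0 ≤ (cmax - cmin) * gk := mul_nonneg (by linarith) hgknn
        have : 0 ≤ γ ^ k * (Vmax - Vmin) := mul_nonneg hγknn (by linarith)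
        rw [hUk, hLk]; nlinarith [mul_nonneg (sub_nonneg.2 hcc) hgknn]
      -- decomposition of the difference
      have hd : hStepCost Phat chat γ π V (k+1) s - hStepCost P c γ π V (k+1) s
          = (chat s (π s) - c s (π s)) +
            γ * ((∑ s', Phat s (π s) s' *
                (hStepCost Phat chat γ π V k s' - hStepCost P c γ π V k s')) +
              ∑ s', (Phat s (π s) s' - P s (π s) s') * hStepCost P c γ π V k s') := by
        show (chat s (π s) + γ * ∑ s', Phat s (π s) s' * hStepCost Phat chat γ π V k s')
            - (c s (π s) + γ * ∑ s', P s (π s) s' * hStepCost P c γ π V k s') = _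
        simp only [mul_sub, sub_mul, Finset.sum_sub_distrib]
        ring
      -- term 1
      have hT1 : |∑ s', Phat s (π s) s' *
          (hStepCost Phat chat γ π V k s' - hStepCost P c γ π V k s')|
          ≤ simBound γ α cmin cmax Vmin Vmax k := by
        refine (Finset.abs_sum_le_sum_abs _ _).trans ?_
        have h1 : ∀ s' ∈ Finset.univ, |Phat s (π s) s' *
            (hStepCost Phat chat γ π V k s' - hStepCost P c γ π V k s')|
            ≤ Phat s (π s) s' * simBound γ α cmin cmax Vmin Vmax k := by
          intro s' _
          rw [abs_mul, abs_of_nonneg (hPhat0 s (π s) s')]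
          exact mul_le_mul_of_nonneg_left (ih s') (hPhat0 s (π s) s')
        refine (Finset.sum_le_sum h1).trans ?_
        rw [← Finset.sum_mul, hPhat1, one_mul]
      -- term 2 : centering
      have hzero : ∑ s', (Phat s (π s) s' - P s (π s) s') = 0 := by
        rw [Finset.sum_sub_distrib, hPhat1, hP1, sub_self]
      have hcent : ∑ s', (Phat s (π s) s' - P s (π s) s') * hStepCost P c γ π V k s'
          = ∑ s', (Phat s (π s) s' - P s (π s) s') *
              (hStepCost P c γ π V k s' - (Lk + Uk) / 2) := by
        simp only [mul_sub, Finset.sum_sub_distrib, ← Finset.sum_mul, hzero, zero_mul,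
          sub_zero]
      have hT2 : |∑ s', (Phat s (π s) s' - P s (π s) s') * hStepCost P c γ π V k s'|
          ≤ α * ((Uk - Lk) / 2) := by
        rw [hcent]
        refine (Finset.abs_sum_le_sum_abs _ _).trans ?_
        have h1 : ∀ s' ∈ Finset.univ, |(Phat s (π s) s' - P s (π s) s') *
            (hStepCost P c γ π V k s' - (Lk + Uk) / 2)|
            ≤ |Phat s (π s) s' - P s (π s) s'| * ((Uk - Lk) / 2) := by
          intro s' _
          rw [abs_mul]
          refine mul_le_mul_of_nonneg_left ?_ (abs_nonneg _)
          have h2 := (hrange s').1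
          have h3 := (hrange s').2
          rw [abs_le]
          constructor <;> [linarith; linarith]
        refine (Finset.sum_le_sum h1).trans ?_
        rw [← Finset.sum_mul]
        exact mul_le_mul_of_nonneg_right (hPα s (π s)) (by linarith)
      -- put things together
      have hmain : |hStepCost Phat chat γ π V (k+1) s - hStepCost P c γ π V (k+1) s|
          ≤ α + γ * (simBound γ α cmin cmax Vmin Vmax k + α * ((Uk - Lk) / 2)) := by
        rw [hd]
        refine (abs_add_le _ _).trans ?_
        have h1 := hcα s (π s)
        have h2 : |γ * ((∑ s', Phat s (π s) s' *
            (hStepCost Phat chat γ π V k s' - hStepCost P c γ π V k s')) +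
            ∑ s', (Phat s (π s) s' - P s (π s) s') * hStepCost P c γ π V k s')|
            ≤ γ * (simBound γ α cmin cmax Vmin Vmax k + α * ((Uk - Lk) / 2)) := by
          rw [abs_mul, abs_of_nonneg hγ0]
          refine mul_le_mul_of_nonneg_left ?_ hγ0
          exact (abs_add_le _ _).trans (add_le_add hT1 hT2)
        linarith
      refine hmain.trans ?_
      -- arithmetic : α + γ * (E k + α * Sk/2) ≤ E (k+1)
      have hg : (1 - γ ^ (k+1)) / (1 - γ) = 1 + γ * gk := by
        rw [hgk]; field_simp; ring
      have hkey : γ * ((1 - γ ^ (k - 1)) / (1 - γ)) ≤ gk := by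
        have h2 : γ * (1 - γ ^ (k - 1)) ≤ 1 - γ ^ k := by
          cases k with
          | zero => simp
          | succ j =>
              simp only [Nat.add_sub_cancel]
              have h3 : γ * γ ^ j = γ ^ (j + 1) := by ring
              nlinarith [pow_le_one₀ hγ0 (le_of_lt hγ1) (n := j)]
        rw [hgk, mul_div_assoc']
        rw [div_le_div_iff₀ hpos hpos]
        nlinarith
      simp only [simBound, Nat.add_sub_cancel, Nat.cast_add, Nat.cast_one]
      rw [hg, pow_succ]
      simp only [← hgk]
      have hd1 : (0:ℝ) ≤ (cmax - cmin) / 2 := by linarith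
      have hknn : (0:ℝ) ≤ (k:ℝ) := Nat.cast_nonneg k
      have h1 := mul_le_mul_of_nonneg_right hkey
        (mul_nonneg (mul_nonneg (mul_nonneg hγ0 hα) hknn) hd1)
      have hUL : Uk - Lk = (cmax - cmin) * gk + γ ^ k * (Vmax - Vmin) := by
        rw [hUk, hLk]; ring
      rw [hUL]
      linarith [h1]

end Sim

section Dom

variable {S A : Type*} [Fintype S] [Nonempty S]

lemma Vstar_le_Vpihat (P : S → A → S → ℝ) (c : S → A → ℝ) (γ : ℝ)
    (Vstar Vpihat : S → ℝ) (pihat : S → A) (hγ0 : 0 ≤ γ) (hγ1 : γ < 1)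
    (hP0 : ∀ s a s', 0 ≤ P s a s') (hP1 : ∀ s a, ∑ s', P s a s' = 1)
    (hVstarOpt : ∀ s a, Vstar s ≤ c s a + γ * ∑ s', P s a s' * Vstar s')
    (hVpihatBellman : ∀ s,
      Vpihat s = c s (pihat s) + γ * ∑ s', P s (pihat s) s' * Vpihat s') :
    ∀ s, Vstar s ≤ Vpihat s := by
  obtain ⟨s₀, -, hmax⟩ := Finset.exists_max_image Finset.univ
    (fun s => Vstar s - Vpihat s) Finset.univ_nonempty
  have hmax' : ∀ s, Vstar s - Vpihat s ≤ Vstar s₀ - Vpihat s₀ :=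
    fun s => hmax s (Finset.mem_univ s)
  have h1 : Vstar s₀ - Vpihat s₀ ≤ γ * (Vstar s₀ - Vpihat s₀) := by
    have h2 := hVstarOpt s₀ (pihat s₀)
    have h3 := hVpihatBellman s₀
    have h4 : ∑ s', P s₀ (pihat s₀) s' * Vstar s' - ∑ s', P s₀ (pihat s₀) s' * Vpihat s'
        ≤ Vstar s₀ - Vpihat s₀ := by
      rw [← Finset.sum_sub_distrib]
      have h5 : ∀ s' ∈ Finset.univ, P s₀ (pihat s₀) s' * Vstar s' -
          P s₀ (pihat s₀) s' * Vpihat s'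
          ≤ P s₀ (pihat s₀) s' * (Vstar s₀ - Vpihat s₀) := by
        intro s' _
        rw [← mul_sub]
        exact mul_le_mul_of_nonneg_left (hmax' s') (hP0 _ _ _)
      refine (Finset.sum_le_sum h5).trans ?_
      rw [← Finset.sum_mul, hP1, one_mul]
    have h6 := mul_le_mul_of_nonneg_left h4 hγ0
    rw [mul_sub] at h6
    linarith
  have h7 : Vstar s₀ - Vpihat s₀ ≤ 0 := by nlinarith
  intro s
  have := hmax' s
  linarith

end Dom


/-- Performance bound of the `H`-step greedy policy `π̂` computed with an
`α`-approximate model `M̂` and `ε`-approximate terminal value `V̂`. -/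
theorem h_step_greedy_performance_bound
    {S A : Type*} [Fintype S] [Nonempty S] [Fintype A] [Nonempty A]
    (γ α ε cmin cmax Vmin Vmax : ℝ) (H : ℕ)
    (P Phat : S → A → S → ℝ) (c chat : S → A → ℝ)
    (Vstar Vhat Vpihat : S → ℝ) (pistar pihat : S → A)
    (hH : 1 ≤ H) (hγ0 : 0 ≤ γ) (hγ1 : γ < 1) (hα : 0 ≤ α) (hε : 0 ≤ ε)
    (hP0 : ∀ s a s', 0 ≤ P s a s') (hP1 : ∀ s a, ∑ s', P s a s' = 1)
    (hPhat0 : ∀ s a s', 0 ≤ Phat s a s') (hPhat1 : ∀ s a, ∑ s', Phat s a s' = 1)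
    (hPα : ∀ s a, ∑ s', |Phat s a s' - P s a s'| ≤ α)
    (hcα : ∀ s a, |chat s a - c s a| ≤ α)
    (hcbound : ∀ s a, cmin ≤ c s a ∧ c s a ≤ cmax)
    (hVbound : ∀ s, Vmin ≤ Vstar s ∧ Vstar s ≤ Vmax)
    (hVε : ∀ s, |Vhat s - Vstar s| ≤ ε)
    -- `V*` is the value of the optimal policy `π*` on `M` (Bellman equation) …
    (hVstarBellman : ∀ s,
      Vstar s = c s (pistar s) + γ * ∑ s', P s (pistar s) s' * Vstar s')
    -- … and `V*` is optimal (Bellman optimality inequality)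
    (hVstarOpt : ∀ s a, Vstar s ≤ c s a + γ * ∑ s', P s a s' * Vstar s')
    -- `V^π̂_M` is the infinite-horizon value of `π̂` on the true MDP `M`
    (hVpihatBellman : ∀ s,
      Vpihat s = c s (pihat s) + γ * ∑ s', P s (pihat s) s' * Vpihat s')
    -- `π̂` is the `H`-step greedy policy w.r.t. the approximate model/value
    (hgreedy : ∀ (π : S → A) (s : S),
      hStepCost Phat chat γ pihat Vhat H s ≤ hStepCost Phat chat γ π Vhat H s) :
    ∀ s, |Vpihat s - Vstar s| ≤
      (2 / (1 - γ ^ H)) *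
        (γ * ((1 - γ ^ (H - 1)) / (1 - γ)) * α * H * ((cmax - cmin) / 2) +
         γ ^ H * α * H * ((Vmax - Vmin) / 2) +
         ((1 - γ ^ H) / (1 - γ)) * α + γ ^ H * ε) := by
  have hγH : γ ^ H < 1 := pow_lt_one₀ hγ0 hγ1 (by omega)
  have hγHnn : (0:ℝ) ≤ γ ^ H := pow_nonneg hγ0 H
  have hpos : (0:ℝ) < 1 - γ ^ H := by linarith
  -- min/max comparisons
  obtain ⟨s1⟩ := ‹Nonempty S›
  obtain ⟨a1⟩ := ‹Nonempty A›
  have hcc : cmin ≤ cmax := le_trans (hcbound s1 a1).1 (hcbound s1 a1).2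
  have hVV : Vmin ≤ Vmax := le_trans (hVbound s1).1 (hVbound s1).2
  -- dominance
  have hdom := Vstar_le_Vpihat P c γ Vstar Vpihat pihat hγ0 hγ1 hP0 hP1
    hVstarOpt hVpihatBellman
  -- maximal loss state
  obtain ⟨s₀, -, hmax⟩ := Finset.exists_max_image Finset.univ
    (fun s => Vpihat s - Vstar s) Finset.univ_nonempty
  set δ : ℝ := Vpihat s₀ - Vstar s₀ with hδ
  have hδ0 : 0 ≤ δ := by have := hdom s₀; linarith
  have habs : ∀ s, |Vpihat s - Vstar s| ≤ δ := by
    intro s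
    rw [abs_of_nonneg (by have := hdom s; linarith)]
    exact hmax s (Finset.mem_univ s)
  -- the bracket B
  set B : ℝ := simBound γ α cmin cmax Vmin Vmax H with hB
  -- chain of inequalities at s₀
  have h1 : hStepCost P c γ pihat Vpihat H s₀ = Vpihat s₀ :=
    hStepCost_fixed P c γ pihat Vpihat hVpihatBellman H s₀
  have h2 := hStepCost_terminal_perturb P c γ pihat Vpihat Vstar δ hγ0 hP0 hP1
    habs H s₀
  have h3 := hStepCost_sim P Phat c chat γ α pihat Vstar cmin cmax Vmin Vmax
    hγ0 hγ1 hα hP0 hP1 hPhat0 hPhat1 hPα hcα hcbound hVbound hcc hVV H s₀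
  have h4 := hStepCost_terminal_perturb Phat chat γ pihat Vhat Vstar ε hγ0
    hPhat0 hPhat1 hVε H s₀
  have h5 := hgreedy pistar s₀
  have h6 := hStepCost_terminal_perturb Phat chat γ pistar Vhat Vstar ε hγ0
    hPhat0 hPhat1 hVε H s₀
  have h7 := hStepCost_sim P Phat c chat γ α pistar Vstar cmin cmax Vmin Vmax
    hγ0 hγ1 hα hP0 hP1 hPhat0 hPhat1 hPα hcα hcbound hVbound hcc hVV H s₀
  have h8 : hStepCost P c γ pistar Vstar H s₀ = Vstar s₀ :=
    hStepCost_fixed P c γ pistar Vstar hVstarBellman H s₀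
  rw [abs_le] at h2 h3 h4 h6 h7
  have hδle : δ ≤ 2 * (B + γ ^ H * ε) / (1 - γ ^ H) := by
    rw [le_div_iff₀ hpos]
    nlinarith [h2.1, h2.2, h3.1, h3.2, h4.1, h4.2, h6.1, h6.2, h7.1, h7.2]
  intro s
  have hfin : (2 / (1 - γ ^ H)) *
      (γ * ((1 - γ ^ (H - 1)) / (1 - γ)) * α * H * ((cmax - cmin) / 2) +
       γ ^ H * α * H * ((Vmax - Vmin) / 2) +
       ((1 - γ ^ H) / (1 - γ)) * α + γ ^ H * ε)
      = 2 * (B + γ ^ H * ε) / (1 - γ ^ H) := by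
    rw [hB]; simp only [simBound]; ring
  rw [hfin]
  exact (habs s).trans hδle
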